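/- arXiv:1308.6556 — 5 statements merged into one kernel-verified Lean document; each statement's English description precedes it below -/
import Mathlib

section
/- Let A₀ = (i/3)·[[0,−3,−√3],[3,0,√3],[√3,−√3,0]], A₁ = [[0,0,0],[0,1,0],[0,0,−1]], A₂ = [[1,0,0],[0,0,0],[0,0,0]] (3×3 complex matrices). Then A₀, A₁, A₂ are self-adjoint, A₂ is positive semi-definite, and for all real x₀, x₁, x₂: 2x₀²x₁ − (x₀² + 3x₁²)x₂ = 3·det(x₀A₀ + x₁A₁ + x₂A₂). -/
open Matrix ComplexOrder

noncomputable def exA₀ : Matrix (Fin 3) (Fin 3) ℂ :=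
  (Complex.I / 3) • !![0, -3, -(Real.sqrt 3 : ℂ);
                       3, 0, (Real.sqrt 3 : ℂ);
                       (Real.sqrt 3 : ℂ), -(Real.sqrt 3 : ℂ), 0]

def exA₁ : Matrix (Fin 3) (Fin 3) ℂ :=
  !![0, 0, 0; 0, 1, 0; 0, 0, -1]

def exA₂ : Matrix (Fin 3) (Fin 3) ℂ :=
  !![1, 0, 0; 0, 0, 0; 0, 0, 0]

lemma exA₀_herm : exA₀.IsHermitian := by
  ext i j
  fin_cases i <;> fin_cases j <;>
    (simp [exA₀, Matrix.conjTranspose_apply, Matrix.vecHead, Matrix.vecTail]; try ring)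

lemma exA₁_herm : exA₁.IsHermitian := by
  ext i j
  fin_cases i <;> fin_cases j <;>
    simp [exA₁, Matrix.conjTranspose_apply, Matrix.vecHead, Matrix.vecTail]

lemma exA₂_psd : exA₂.PosSemidef := by
  refine Matrix.posSemidef_iff_dotProduct_mulVec.mpr ⟨?_, ?_⟩
  · ext i j
    fin_cases i <;> fin_cases j <;>
      simp [exA₂, Matrix.conjTranspose_apply, Matrix.vecHead, Matrix.vecTail]
  · intro x
    have h : star x ⬝ᵥ exA₂.mulVec x = star (x 0) * x 0 := by
      simp [exA₂, Matrix.mulVec, dotProduct, Fin.sum_univ_three,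
        Matrix.vecHead, Matrix.vecTail]
    rw [h]
    exact star_mul_self_nonneg _

/-- **Example (determinantal representation).** The concrete matrices `A₀,A₁,A₂` above are
self-adjoint, `A₂` is positive semi-definite, and
`2x₀²x₁ − (x₀² + 3x₁²)x₂ = 3·det(x₀A₀ + x₁A₁ + x₂A₂)` for all real `x₀,x₁,x₂`. -/
theorem example_det_representation :
    exA₀.IsHermitian ∧ exA₁.IsHermitian ∧ exA₂.PosSemidef ∧
    ∀ x₀ x₁ x₂ : ℝ,
      ((2 * x₀ ^ 2 * x₁ - (x₀ ^ 2 + 3 * x₁ ^ 2) * x₂ : ℝ) : ℂ) =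
        3 * ((x₀ : ℂ) • exA₀ + (x₁ : ℂ) • exA₁ + (x₂ : ℂ) • exA₂).det := by
  refine ⟨exA₀_herm, exA₁_herm, exA₂_psd, fun x₀ x₁ x₂ => ?_⟩
  have hs : (Real.sqrt 3 : ℂ) ^ 2 = 3 := by
    rw [← Complex.ofReal_pow, Real.sq_sqrt (by norm_num)]
    norm_num
  have hI : Complex.I ^ 2 = -1 := Complex.I_sq
  simp [exA₀, exA₁, exA₂, Matrix.det_fin_three]
  linear_combination
    (-(x₂ * x₀ ^ 2 / 3 : ℂ) * ((Real.sqrt 3 : ℂ)) ^ 2 + 3 * (x₀:ℂ) ^ 2 * x₁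
      - ((x₀:ℂ) ^ 2 * x₁ / 3) * ((Real.sqrt 3 : ℂ)) ^ 2) * hI +
    ((x₂:ℂ) * x₀ ^ 2 / 3 + (x₀:ℂ) ^ 2 * x₁ / 3) * hs
end

section
/- Let p(x₀,x₁,x₂) = 2x₀²x₁ − (x₀² + 3x₁²)x₂. Then both sets 𝒫₊ = {x ∈ ℝ³ : p(x) > 0} and 𝒫₋ = {x ∈ ℝ³ : p(x) < 0} are path-connected. -/
private def SPos : Set (Fin 3 → ℝ) :=
  {x : Fin 3 → ℝ | 0 < 2 * (x 0) ^ 2 * (x 1) - ((x 0) ^ 2 + 3 * (x 1) ^ 2) * (x 2)}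

private lemma segJoined {S : Set (Fin 3 → ℝ)} {a b : Fin 3 → ℝ}
    (h : ∀ u : ℝ, 0 ≤ u → u ≤ 1 → ((1 - u) • a + u • b) ∈ S) :
    JoinedIn S a b := by
  have hsub : segment ℝ a b ⊆ S := by
    rintro y ⟨u, v, hu, hv, huv, rfl⟩
    have hv1 : v ≤ 1 := by linarith
    have : u = 1 - v := by linarith
    subst this
    exact h v hv hv1
  have hpc : IsPathConnected (segment ℝ a b) :=
    (convex_segment a b).isPathConnected ⟨a, left_mem_segment ℝ a b⟩
  exact (hpc.joinedIn a (left_mem_segment ℝ a b) b (right_mem_segment ℝ a b)).mono hsub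

private lemma tailJoin (a0 a1 M : ℝ) (ha0 : a0 ≠ 0)
    (hA : 2 * a1 + 3 ≤ M) (hB : -(2 * a1) + 3 ≤ M) (hM3 : 3 ≤ M) :
    JoinedIn SPos ![a0, a1, -M] ![0, 1, -M] := by
  have ha0sq : 0 < a0 ^ 2 := by positivity
  have jB : JoinedIn SPos ![a0, a1, -M] ![a0, 1, -M] := by
    apply segJoined
    intro u hu hu1
    simp only [SPos, Set.mem_setOf_eq, Pi.add_apply, Pi.smul_apply, smul_eq_mul,
      Matrix.cons_val_zero, Matrix.cons_val_one, Matrix.head_cons, Matrix.cons_val_two, Matrix.tail_cons]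
    have h2 : (0:ℝ) < 2 * ((1-u) * a1 + u * 1) + M := by nlinarith
    nlinarith [mul_pos ha0sq h2, sq_nonneg ((1-u) * a1 + u * 1), mul_nonneg (sq_nonneg ((1-u)*a1 + u*1)) (by linarith : (0:ℝ) ≤ M)]
  have jC : JoinedIn SPos ![a0, 1, -M] ![0, 1, -M] := by
    apply segJoined
    intro u hu hu1
    simp only [SPos, Set.mem_setOf_eq, Pi.add_apply, Pi.smul_apply, smul_eq_mul,
      Matrix.cons_val_zero, Matrix.cons_val_one, Matrix.head_cons, Matrix.cons_val_two, Matrix.tail_cons]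
    nlinarith [sq_nonneg ((1-u) * a0), mul_nonneg (sq_nonneg ((1-u)*a0)) (by linarith : (0:ℝ) ≤ M)]
  exact jB.trans jC

private lemma lastJoin (M : ℝ) (hM3 : 3 ≤ M) :
    JoinedIn SPos ![0, 1, -M] ![0, 1, -1] := by
  apply segJoined
  intro u hu hu1
  simp only [SPos, Set.mem_setOf_eq, Pi.add_apply, Pi.smul_apply, smul_eq_mul,
    Matrix.cons_val_zero, Matrix.cons_val_one, Matrix.head_cons, Matrix.cons_val_two, Matrix.tail_cons]
  nlinarith

private lemma joinToBase (x : Fin 3 → ℝ) (hx : x ∈ SPos) :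
    JoinedIn SPos x ![0, 1, -1] := by
  set M : ℝ := max (max (2 * |x 1| + 3) (-(x 2))) 3 with hMdef
  have hM1 : 2 * |x 1| + 3 ≤ M := le_trans (le_max_left _ _) (le_max_left _ _)
  have hM2 : -(x 2) ≤ M := le_trans (le_max_right _ _) (le_max_left _ _)
  have hM3 : (3:ℝ) ≤ M := le_max_right _ _
  have hA : 2 * (x 1) + 3 ≤ M := by
    have := le_abs_self (x 1); linarith
  have hB : -(2 * (x 1)) + 3 ≤ M := by
    have := neg_abs_le (x 1); linarith
  have hd : 0 < (x 0) ^ 2 + 3 * (x 1) ^ 2 := by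
    by_contra h
    push_neg at h
    have h0 : x 0 = 0 := by nlinarith [sq_nonneg (x 0), sq_nonneg (x 1)]
    have h1 : x 1 = 0 := by nlinarith [sq_nonneg (x 0), sq_nonneg (x 1)]
    simp only [SPos, Set.mem_setOf_eq, h0, h1] at hx
    norm_num at hx
  have hxS : 0 < 2 * (x 0) ^ 2 * (x 1) - ((x 0) ^ 2 + 3 * (x 1) ^ 2) * (x 2) := hx
  -- Step A: lower x₂ to -M
  have jA : JoinedIn SPos x ![x 0, x 1, -M] := by
    apply segJoined
    intro u hu hu1
    simp only [SPos, Set.mem_setOf_eq, Pi.add_apply, Pi.smul_apply, smul_eq_mul,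
      Matrix.cons_val_zero, Matrix.cons_val_one, Matrix.head_cons, Matrix.cons_val_two, Matrix.tail_cons]
    have : (1 - u) * x 2 + u * (-M) ≤ x 2 := by nlinarith
    nlinarith [mul_nonneg (le_of_lt hd) (by linarith : (0:ℝ) ≤ x 2 - ((1-u) * x 2 + u * (-M)))]
  rcases eq_or_ne (x 0) 0 with h0 | h0
  · -- x 0 = 0, so x 1 ≠ 0; first move x₀ from 0 to 1
    have h1 : x 1 ≠ 0 := by
      intro h1
      simp only [SPos, Set.mem_setOf_eq, h0, h1] at hx
      norm_num at hx
    have h1sq : 0 < (x 1) ^ 2 := by positivity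
    have jB0 : JoinedIn SPos ![x 0, x 1, -M] ![1, x 1, -M] := by
      apply segJoined
      intro u hu hu1
      simp only [SPos, Set.mem_setOf_eq, Pi.add_apply, Pi.smul_apply, smul_eq_mul,
        Matrix.cons_val_zero, Matrix.cons_val_one, Matrix.head_cons, Matrix.cons_val_two, Matrix.tail_cons, h0]
      have hy0 : (1 - u) * (0:ℝ) + u * 1 = u := by ring
      nlinarith [sq_nonneg u, mul_nonneg (mul_nonneg hu hu) (by linarith : (0:ℝ) ≤ 2 * x 1 + M), mul_pos h1sq (by linarith : (0:ℝ) < M)]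
    exact jA.trans (jB0.trans ((tailJoin 1 (x 1) M one_ne_zero hA hB hM3).trans (lastJoin M hM3)))
  · exact jA.trans ((tailJoin (x 0) (x 1) M h0 hA hB hM3).trans (lastJoin M hM3))

private lemma posConnected : IsPathConnected SPos := by
  refine ⟨![0, 1, -1], ?_, ?_⟩
  · simp only [SPos, Set.mem_setOf_eq, Matrix.cons_val_zero, Matrix.cons_val_one, Matrix.head_cons, Matrix.cons_val_two, Matrix.tail_cons]
    norm_num
  · intro y hy
    exact (joinToBase y hy).symm

/-- **Example (components).** For `p(x₀,x₁,x₂) = 2x₀²x₁ − (x₀² + 3x₁²)x₂`, both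
`𝒫₊ = {x ∈ ℝ³ : p(x) > 0}` and `𝒫₋ = {x ∈ ℝ³ : p(x) < 0}` are path-connected. -/
theorem examplePoly_components_pathConnected :
    IsPathConnected {x : Fin 3 → ℝ |
        0 < 2 * (x 0) ^ 2 * (x 1) - ((x 0) ^ 2 + 3 * (x 1) ^ 2) * (x 2)} ∧
    IsPathConnected {x : Fin 3 → ℝ |
        2 * (x 0) ^ 2 * (x 1) - ((x 0) ^ 2 + 3 * (x 1) ^ 2) * (x 2) < 0} := by
  constructor
  · exact posConnected
  · have hσcont : Continuous (fun x : Fin 3 → ℝ => ![x 0, -(x 1), -(x 2)]) := by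
      apply continuous_pi
      intro i
      fin_cases i <;> simp <;> fun_prop
    have himg : (fun x : Fin 3 → ℝ => ![x 0, -(x 1), -(x 2)]) '' SPos =
        {x : Fin 3 → ℝ | 2 * (x 0) ^ 2 * (x 1) - ((x 0) ^ 2 + 3 * (x 1) ^ 2) * (x 2) < 0} := by
      ext y
      constructor
      · rintro ⟨x, hx, rfl⟩
        simp only [SPos, Set.mem_setOf_eq, Matrix.cons_val_zero, Matrix.cons_val_one,
          Matrix.head_cons, Matrix.cons_val_two, Matrix.tail_cons] at hx ⊢
        nlinarith
      · intro hy
        refine ⟨![y 0, -(y 1), -(y 2)], ?_, ?_⟩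
        · simp only [SPos, Set.mem_setOf_eq, Matrix.cons_val_zero, Matrix.cons_val_one,
            Matrix.head_cons, Matrix.cons_val_two, Matrix.tail_cons] at hy ⊢
          nlinarith
        · funext i
          fin_cases i <;> simp
    rw [← himg]
    exact posConnected.image hσcont
end

section
/- If p ∈ ℝ[x₀,x₁,x₂] is homogeneous and hyperbolic with respect to every vector in the cone {(0,v₁,v₂) : v₁ > 0, v₂ > 0}, then p is semi-hyperbolic with respect to e₂ = (0,0,1): for every x ∈ ℝ³, the one-variable polynomial t ↦ p(x − t·e₂) has only real zeros. -/
open MvPolynomial Polynomial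

/-- The one-variable complex polynomial `t ↦ P(x - t·e)` for `P ∈ ℝ[x₀,…,x_{N-1}]`. -/
noncomputable def linePoly {N : ℕ} (p : MvPolynomial (Fin N) ℝ) (x e : Fin N → ℝ) :
    Polynomial ℂ :=
  MvPolynomial.aeval (fun i => Polynomial.C (x i : ℂ) - Polynomial.C (e i : ℂ) * Polynomial.X) p

/-- A real multivariate polynomial is hyperbolic with respect to `e` if `p(e) ≠ 0` and for
every real `x` the one-variable polynomial `t ↦ p(x - t e)` has only real zeros. -/
def Hyperbolic {N : ℕ} (p : MvPolynomial (Fin N) ℝ) (e : Fin N → ℝ) : Prop :=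
  MvPolynomial.eval e p ≠ 0 ∧ ∀ x : Fin N → ℝ, ∀ z ∈ (linePoly p x e).roots, z.im = 0

/-- A real multivariate polynomial is semi-hyperbolic w.r.t. `e` if for every real `x`,
the one-variable polynomial `t ↦ p(x - t e)` has only real zeros. -/
def SemiHyperbolic {N : ℕ} (p : MvPolynomial (Fin N) ℝ) (e : Fin N → ℝ) : Prop :=
  ∀ x : Fin N → ℝ, ∀ z ∈ (linePoly p x e).roots, z.im = 0

/- ### Auxiliary lemmas -/

noncomputable def Complex.abs : AbsoluteValue ℂ ℝ where
  toFun z := ‖z‖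
  map_mul' := norm_mul
  nonneg' := norm_nonneg
  eq_zero' _ := norm_eq_zero
  add_le' := norm_add_le

theorem Complex.abs_apply (z : ℂ) : Complex.abs z = Real.sqrt (Complex.normSq z) :=
  Complex.norm_def z

theorem Complex.continuous_abs : Continuous Complex.abs := continuous_norm

/-- The degree of the line polynomial is at most the total degree of `p`. -/
lemma natDegree_linePoly_le {N : ℕ} (p : MvPolynomial (Fin N) ℝ) (x e : Fin N → ℝ) :
    (linePoly p x e).natDegree ≤ p.totalDegree := by
  set φ : Fin N → Polynomial ℂ :=
    fun i => Polynomial.C (x i : ℂ) - Polynomial.C (e i : ℂ) * Polynomial.X with hφ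
  have hφ1 : ∀ i, (φ i).natDegree ≤ 1 := by
    intro i
    refine (Polynomial.natDegree_sub_le _ _).trans ?_
    simp only [Polynomial.natDegree_C, max_le_iff]
    exact ⟨Nat.zero_le _, (Polynomial.natDegree_C_mul_le _ _).trans (by simp)⟩
  have : linePoly p x e = MvPolynomial.eval₂ (algebraMap ℝ (Polynomial ℂ)) φ p := rfl
  rw [this, MvPolynomial.eval₂_eq]
  apply Polynomial.natDegree_sum_le_of_forall_le
  intro m hm
  refine (Polynomial.natDegree_mul_le).trans ?_
  have h1 : (algebraMap ℝ (Polynomial ℂ) (MvPolynomial.coeff m p)).natDegree = 0 := by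
    rw [show (algebraMap ℝ (Polynomial ℂ)) (MvPolynomial.coeff m p)
      = Polynomial.C ((MvPolynomial.coeff m p : ℝ) : ℂ) from rfl]
    exact Polynomial.natDegree_C _
  rw [h1, zero_add]
  refine (Polynomial.natDegree_prod_le _ _).trans ?_
  refine le_trans (Finset.sum_le_sum (fun i _ =>
    (Polynomial.natDegree_pow_le).trans (by
      calc m i * (φ i).natDegree ≤ m i * 1 := Nat.mul_le_mul_left _ (hφ1 i)
      _ = m i := Nat.mul_one _))) ?_
  simpa [Finsupp.sum] using MvPolynomial.le_totalDegree hm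

/-- Key inequality: if all roots of `q` are real, then for any `z : ℂ` and real `w` with
`|w - z.re| ≤ |z.im|`, we have `|q(w)| ≤ 2^(natDegree q) * |q(z)|`. -/
lemma key_ineq (q : Polynomial ℂ) (hq : ∀ r ∈ q.roots, r.im = 0) (z : ℂ) (w : ℝ)
    (hw : |w - z.re| ≤ |z.im|) :
    Complex.abs (q.eval (w : ℂ)) ≤ 2 ^ q.natDegree * Complex.abs (q.eval z) := by
  by_cases hq0 : q = 0
  · simp [hq0]
  have hcard : q.roots.card = q.natDegree :=
    Polynomial.splits_iff_card_roots.mp (IsAlgClosed.splits q)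
  have hfact := Polynomial.C_leadingCoeff_mul_prod_multiset_X_sub_C hcard
  have heval : ∀ t : ℂ, q.eval t = q.leadingCoeff * (q.roots.map fun r => t - r).prod := by
    intro t
    conv_lhs => rw [← hfact]
    rw [Polynomial.eval_mul, Polynomial.eval_C, Polynomial.eval_multiset_prod,
      Multiset.map_map]
    congr 2
    ext r
    simp
  have habs : ∀ t : ℂ, Complex.abs (q.eval t)
      = Complex.abs q.leadingCoeff * (q.roots.map fun r => Complex.abs (t - r)).prod := by
    intro t
    rw [heval t, map_mul]
    congr 1
    rw [map_multiset_prod Complex.abs, Multiset.map_map]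
    rfl
  rw [habs, habs]
  rw [← hcard]
  -- pointwise bound on factors
  have hpt : ∀ r ∈ q.roots, Complex.abs ((w : ℂ) - r) ≤ 2 * Complex.abs (z - r) := by
    intro r hr
    have him : r.im = 0 := hq r hr
    have h1 : Complex.abs ((w : ℂ) - r) = Real.sqrt ((w - r.re) ^ 2) := by
      rw [Complex.abs_apply, Complex.normSq_apply]
      simp [him]
      ring_nf
    have h2 : Complex.abs (z - r) = Real.sqrt ((z.re - r.re) ^ 2 + z.im ^ 2) := by
      rw [Complex.abs_apply, Complex.normSq_apply]
      simp [him]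
      ring_nf
    rw [h1, h2]
    have h4 : (2 : ℝ) * Real.sqrt ((z.re - r.re) ^ 2 + z.im ^ 2)
        = Real.sqrt (4 * ((z.re - r.re) ^ 2 + z.im ^ 2)) := by
      rw [show (4 : ℝ) = 2 ^ 2 by norm_num, Real.sqrt_mul (by positivity),
        Real.sqrt_sq (by norm_num)]
    rw [h4]
    apply Real.sqrt_le_sqrt
    have hw2 : (w - z.re) ^ 2 ≤ z.im ^ 2 := by
      rw [← sq_abs (w - z.re), ← sq_abs z.im]
      exact pow_le_pow_left₀ (abs_nonneg _) hw 2
    nlinarith [sq_nonneg ((w - z.re) - (z.re - r.re))]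
  -- multiset product bound
  have hmono : (q.roots.map fun r => Complex.abs ((w : ℂ) - r)).prod
      ≤ (q.roots.map fun r => 2 * Complex.abs (z - r)).prod := by
    apply Multiset.prod_map_le_prod_map₀
    · intro r _; exact AbsoluteValue.nonneg _ _
    · exact hpt
  have hsplit2 : (q.roots.map fun r => 2 * Complex.abs (z - r)).prod
      = 2 ^ q.roots.card * (q.roots.map fun r => Complex.abs (z - r)).prod := by
    rw [Multiset.prod_map_mul]
    congr 1
    simp [Multiset.map_const', Multiset.prod_replicate]
  calc Complex.abs q.leadingCoeff * (q.roots.map fun r => Complex.abs ((w : ℂ) - r)).prod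
      ≤ Complex.abs q.leadingCoeff * (q.roots.map fun r => 2 * Complex.abs (z - r)).prod := by
        apply mul_le_mul_of_nonneg_left hmono (AbsoluteValue.nonneg _ _)
    _ = 2 ^ q.roots.card *
        (Complex.abs q.leadingCoeff * (q.roots.map fun r => Complex.abs (z - r)).prod) := by
        rw [hsplit2]; ring

/-- Evaluation of the line polynomial as an `MvPolynomial` evaluation. -/
lemma eval_linePoly {N : ℕ} (p : MvPolynomial (Fin N) ℝ) (x e : Fin N → ℝ) (t : ℂ) :
    (linePoly p x e).eval t
      = MvPolynomial.eval₂ (algebraMap ℝ ℂ) (fun i => (x i : ℂ) - (e i : ℂ) * t) p := by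
  have h0 : (linePoly p x e).eval t = (Polynomial.evalRingHom t)
      (MvPolynomial.eval₂ (algebraMap ℝ (Polynomial ℂ))
        (fun i => Polynomial.C (x i : ℂ) - Polynomial.C (e i : ℂ) * Polynomial.X) p) := rfl
  rw [h0, MvPolynomial.eval₂_comp_left]
  congr 1
  · ext r
    simp
  · ext i
    simp

/-- Continuity in `ε` of the evaluation of the line polynomial along `![0, ε, 1]`. -/
lemma continuous_linePoly_eval (p : MvPolynomial (Fin 3) ℝ) (x : Fin 3 → ℝ) (c : ℂ) :
    Continuous (fun ε : ℝ => (linePoly p x ![0, ε, 1]).eval c) := by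
  have h : ∀ ε : ℝ, (linePoly p x ![0, ε, 1]).eval c
      = MvPolynomial.eval₂ (algebraMap ℝ ℂ)
          (fun i => (x i : ℂ) - ((![0, ε, 1] : Fin 3 → ℝ) i : ℂ) * c) p :=
    fun ε => eval_linePoly p x ![0, ε, 1] c
  simp only [h]
  simp only [MvPolynomial.eval₂_eq]
  apply continuous_finset_sum
  intro m _
  apply Continuous.mul continuous_const
  apply continuous_finset_prod
  intro i _
  apply Continuous.pow
  apply Continuous.sub continuous_const
  apply Continuous.mul _ continuous_const
  fin_cases i <;> simp <;> fun_prop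

/-- If `p ∈ ℝ[x₀,x₁,x₂]` is homogeneous and hyperbolic with respect to every vector in the
cone `{(0,v₁,v₂) : v₁,v₂ > 0}`, then `p` is semi-hyperbolic with respect to `e₂ = (0,0,1)`. -/
theorem hyperbolic_cone_implies_semiHyperbolic (d : ℕ) (p : MvPolynomial (Fin 3) ℝ)
    (hhom : p.IsHomogeneous d)
    (hhyp : ∀ v₁ v₂ : ℝ, 0 < v₁ → 0 < v₂ → Hyperbolic p ![0, v₁, v₂]) :
    SemiHyperbolic p ![0, 0, 1] := by
  intro x z hz
  by_contra hb
  obtain ⟨hq0, hroot⟩ := Polynomial.mem_roots'.mp hz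
  set q₀ : Polynomial ℂ := linePoly p x ![0, 0, 1] with hq₀def
  -- every real w in the interval [z.re - |z.im|, z.re + |z.im|] is a root of q₀
  have hall : ∀ w : ℝ, |w - z.re| ≤ |z.im| → q₀.eval (w : ℂ) = 0 := by
    intro w hw
    have hcont1 := (continuous_linePoly_eval p x (w : ℂ)).tendsto 0
    have hcont2 := (continuous_linePoly_eval p x z).tendsto 0
    have htend1 : Filter.Tendsto (fun ε : ℝ => Complex.abs ((linePoly p x ![0, ε, 1]).eval (w : ℂ)))
        (nhdsWithin 0 (Set.Ioi 0)) (nhds (Complex.abs (q₀.eval (w : ℂ)))) := by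
      exact (Complex.continuous_abs.tendsto _ |>.comp hcont1).mono_left nhdsWithin_le_nhds
    have htend2 : Filter.Tendsto
        (fun ε : ℝ => (2 : ℝ) ^ p.totalDegree * Complex.abs ((linePoly p x ![0, ε, 1]).eval z))
        (nhdsWithin 0 (Set.Ioi 0)) (nhds ((2 : ℝ) ^ p.totalDegree * Complex.abs (q₀.eval z))) := by
      exact Filter.Tendsto.const_mul _
        ((Complex.continuous_abs.tendsto _ |>.comp hcont2).mono_left nhdsWithin_le_nhds)
    have hineq : ∀ᶠ ε : ℝ in nhdsWithin 0 (Set.Ioi 0),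
        Complex.abs ((linePoly p x ![0, ε, 1]).eval (w : ℂ))
          ≤ (2 : ℝ) ^ p.totalDegree * Complex.abs ((linePoly p x ![0, ε, 1]).eval z) := by
      filter_upwards [self_mem_nhdsWithin] with ε hε
      have hεpos : (0 : ℝ) < ε := hε
      have hroots := (hhyp ε 1 hεpos one_pos).2 x
      have h1 := key_ineq (linePoly p x ![0, ε, 1]) hroots z w hw
      refine h1.trans ?_
      apply mul_le_mul_of_nonneg_right _ (AbsoluteValue.nonneg _ _)
      exact pow_le_pow_right₀ (by norm_num) (natDegree_linePoly_le p x ![0, ε, 1])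
    have hle : Complex.abs (q₀.eval (w : ℂ)) ≤ (2 : ℝ) ^ p.totalDegree * Complex.abs (q₀.eval z) :=
      le_of_tendsto_of_tendsto htend1 htend2 hineq
    have hz0 : q₀.eval z = 0 := hroot
    have : Complex.abs (q₀.eval (w : ℂ)) ≤ 0 := by
      simpa [hz0] using hle
    have := le_antisymm this (AbsoluteValue.nonneg _ _)
    exact (AbsoluteValue.eq_zero _).mp this
  -- hence q₀ has infinitely many roots
  have hinf : Set.Infinite { t : ℂ | q₀.IsRoot t } := by
    apply Set.Infinite.mono (s := (fun w : ℝ => (w : ℂ)) '' Set.Icc (z.re - |z.im|) (z.re + |z.im|))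
    · rintro t ⟨w, hw, rfl⟩
      apply hall
      rw [abs_le]
      constructor <;> [linarith [hw.1]; linarith [hw.2]]
    · apply Set.Infinite.image
      · exact fun a _ b _ h => Complex.ofReal_injective h
      · apply Set.Icc_infinite
        have : 0 < |z.im| := abs_pos.mpr hb
        linarith
  exact hq0 (Polynomial.eq_zero_of_infinite_isRoot q₀ hinf)
end

section
/- If p ∈ ℝ[x₀,x₁,x₂] is homogeneous and hyperbolic with respect to every vector in the cone {(0,v₁,v₂) : v₁ > 0, v₂ > 0}, then the one-variable complex polynomial t ↦ p(1, t, i) has no zeros in the open upper half-plane: for every z ∈ ℂ with Im z > 0, p(1, z, i) ≠ 0. -/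
set_option maxRecDepth 4000


open MvPolynomial Polynomial

lemma coeff_prod_het {ι : Type*} (s : Finset ι) (f : ι → Polynomial ℂ) (n : ι → ℕ)
    (h : ∀ i ∈ s, (f i).natDegree ≤ n i) :
    (∏ i ∈ s, f i).coeff (∑ i ∈ s, n i) = ∏ i ∈ s, (f i).coeff (n i) := by
  induction s using Finset.cons_induction with
  | empty => simp
  | cons a s ha ih =>
    rw [Finset.prod_cons, Finset.sum_cons,
      Polynomial.coeff_mul_add_eq_of_natDegree_le (h a (Finset.mem_cons_self a s))
        ((Polynomial.natDegree_prod_le _ _).trans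
          (Finset.sum_le_sum fun i hi => h i (Finset.mem_cons_of_mem hi))),
      ih fun i hi => h i (Finset.mem_cons_of_mem hi), Finset.prod_cons]

lemma natDegree_lin_le (a b : ℂ) : (Polynomial.C a - Polynomial.C b * Polynomial.X).natDegree ≤ 1 := by
  refine (Polynomial.natDegree_sub_le _ _).trans ?_
  simp only [Polynomial.natDegree_C, max_le_iff]
  exact ⟨Nat.zero_le _, (Polynomial.natDegree_C_mul_le _ _).trans (by simp)⟩

lemma linePoly_coeff_top {N d : ℕ} (p : MvPolynomial (Fin N) ℝ) (hhom : p.IsHomogeneous d)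
    (x e : Fin N → ℝ) :
    (linePoly p x e).coeff d = (-1 : ℂ) ^ d * ((MvPolynomial.eval e p : ℝ) : ℂ) := by
  unfold linePoly
  rw [MvPolynomial.aeval_def, MvPolynomial.eval₂_eq, Polynomial.finset_sum_coeff,
    MvPolynomial.eval_eq]
  push_cast
  rw [Finset.mul_sum]
  apply Finset.sum_congr rfl
  intro m hm
  have hdeg : ∑ i ∈ m.support, m i = d := by
    have := hhom (MvPolynomial.mem_support_iff.mp hm)
    rw [← this]
    rw [show (Finsupp.weight 1 : (Fin N →₀ ℕ) →+ ℕ) = Finsupp.weight (fun _ => 1) from rfl,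
      ← Finsupp.degree_eq_weight_one]
    rfl
  have hcast : (algebraMap ℝ (Polynomial ℂ)) (MvPolynomial.coeff m p)
      = Polynomial.C ((MvPolynomial.coeff m p : ℝ) : ℂ) := by
    simp [Polynomial.algebraMap_apply]
  rw [hcast, Polynomial.coeff_C_mul, ← hdeg,
    coeff_prod_het m.support _ (fun i => m i)
      (fun i _ => (Polynomial.natDegree_pow_le).trans
        (by simpa using Nat.mul_le_mul_left (m i) (natDegree_lin_le _ _)))]
  have hfac : ∀ i ∈ m.support,
      ((Polynomial.C (x i : ℂ) - Polynomial.C (e i : ℂ) * Polynomial.X) ^ m i).coeff (m i)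
        = (-1 : ℂ) ^ m i * (e i : ℂ) ^ m i := by
    intro i _
    have h1 : (Polynomial.C (x i : ℂ) - Polynomial.C (e i : ℂ) * Polynomial.X).coeff 1
        = -(e i : ℂ) := by simp
    have := Polynomial.coeff_pow_of_natDegree_le (m := m i) (natDegree_lin_le (x i : ℂ) (e i : ℂ))
    rw [mul_one] at this
    rw [this, h1, neg_pow]
  rw [Finset.prod_congr rfl hfac,
    Finset.prod_mul_distrib, Finset.prod_pow_eq_pow_sum, hdeg]
  ring

lemma linePoly_eval {N : ℕ} (p : MvPolynomial (Fin N) ℝ) (x e : Fin N → ℝ) (t : ℂ) :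
    (linePoly p x e).eval t
      = MvPolynomial.aeval (fun i => (x i : ℂ) - (e i : ℂ) * t) p := by
  unfold linePoly
  let φ : Polynomial ℂ →ₐ[ℝ] ℂ := (Polynomial.aeval t).restrictScalars ℝ
  have : Polynomial.eval t
      (MvPolynomial.aeval
        (fun i => Polynomial.C (x i : ℂ) - Polynomial.C (e i : ℂ) * Polynomial.X) p)
      = φ (MvPolynomial.aeval
        (fun i => Polynomial.C (x i : ℂ) - Polynomial.C (e i : ℂ) * Polynomial.X) p) := rfl
  have hf : (fun i => φ (Polynomial.C (x i : ℂ) - Polynomial.C (e i : ℂ) * Polynomial.X))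
      = fun i => (x i : ℂ) - (e i : ℂ) * t := funext fun i => by simp [φ]
  rw [this, ← AlgHom.comp_apply, MvPolynomial.comp_aeval, hf]

/-- If `p ∈ ℝ[x₀,x₁,x₂]` is homogeneous and hyperbolic with respect to every vector in the
cone `{(0,v₁,v₂) : v₁,v₂ > 0}`, then `t ↦ p(1,t,i)` has no zeros in the open upper
half-plane: for every `z ∈ ℂ` with `Im z > 0`, `p(1,z,i) ≠ 0`. -/
theorem hyperbolic_cone_no_upper_roots (d : ℕ) (p : MvPolynomial (Fin 3) ℝ)
    (hhom : p.IsHomogeneous d)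
    (hhyp : ∀ v₁ v₂ : ℝ, 0 < v₁ → 0 < v₂ → Hyperbolic p ![0, v₁, v₂]) :
    ∀ z : ℂ, 0 < z.im → MvPolynomial.aeval ![(1 : ℂ), z, Complex.I] p ≠ 0 := by
  intro z hz h0
  obtain ⟨hne, hroots⟩ := hhyp z.im 1 hz one_pos
  set e : Fin 3 → ℝ := ![0, z.im, 1] with he
  set x : Fin 3 → ℝ := ![1, z.re, 0] with hx
  have hL : linePoly p x e ≠ 0 := by
    intro h
    have hc := linePoly_coeff_top p hhom x e
    rw [h] at hc
    simp only [Polynomial.coeff_zero] at hc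
    have : ((MvPolynomial.eval e p : ℝ) : ℂ) = 0 := by
      have hne1 : ((-1 : ℂ)) ^ d ≠ 0 := by
        simp
      field_simp at hc
      exact (mul_eq_zero.mp hc.symm).resolve_left hne1
    exact hne (by exact_mod_cast this)
  have heval : (linePoly p x e).eval (-Complex.I) = 0 := by
    have hf : (fun i => ((x i : ℝ) : ℂ) - ((e i : ℝ) : ℂ) * (-Complex.I))
        = ![(1 : ℂ), z, Complex.I] := by
      funext i
      fin_cases i
      · simp [x, e]
      · show (z.re : ℂ) - (z.im : ℂ) * (-Complex.I) = z
        apply Complex.ext <;> simp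
      · simp [x, e]
    rw [linePoly_eval, hf, h0]
  have hroot : -Complex.I ∈ (linePoly p x e).roots := by
    rw [Polynomial.mem_roots hL]
    exact heval
  have him := hroots x (-Complex.I) hroot
  simp at him
end

section
/- Let A and B be n×n matrices over a field (or over ℂ). Then the one-variable polynomial t ↦ det(tA + B) has degree at most rank A. -/
open Polynomial Matrix

lemma aux_det_piecewise_eq_zero {F : Type*} [Field F] {n : ℕ}
    (A B : Matrix (Fin n) (Fin n) F) (S : Finset (Fin n)) (hS : A.rank < S.card) :
    Matrix.det (S.piecewise A B) = 0 := by
  classical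
  have hnotind : ¬ LinearIndependent F (fun i : S => A i) := by
    intro hind
    have h1 := linearIndependent_iff_card_le_finrank_span.mp hind
    have h2 : (Set.range (fun i : S => A i)).finrank F ≤
        Module.finrank F (Submodule.span F (Set.range A)) := by
      apply Submodule.finrank_mono
      apply Submodule.span_mono
      rintro _ ⟨i, rfl⟩
      exact ⟨i, rfl⟩
    change _ ≤ Module.finrank F (Submodule.span F (Set.range A.row)) at h2
    rw [← Matrix.rank_eq_finrank_span_row] at h2
    have := h1.trans h2
    simp [Fintype.card_coe] at this
    omega
  rw [Fintype.not_linearIndependent_iff] at hnotind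
  obtain ⟨g, hg, i₀, hi₀⟩ := hnotind
  refine Matrix.exists_vecMul_eq_zero_iff.mp ?_
  refine ⟨fun i => if h : i ∈ S then g ⟨i, h⟩ else 0, ?_, ?_⟩
  · intro hv
    apply hi₀
    have := congrFun hv i₀
    simpa [i₀.2] using this
  · funext j
    have : ∀ i : Fin n, (if h : i ∈ S then g ⟨i, h⟩ else 0) * (S.piecewise A B) i j
        = if h : i ∈ S then g ⟨i, h⟩ * A i j else 0 := by
      intro i
      by_cases h : i ∈ S <;> simp [h, Finset.piecewise, Finset.piecewise_eq_of_mem, Finset.piecewise_eq_of_notMem]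
    simp only [Matrix.vecMul, dotProduct, this, Pi.zero_apply]
    have h0 : ∀ x ∈ Finset.univ, x ∉ S →
        (if h : x ∈ S then g ⟨x, h⟩ * A x j else 0) = 0 := by
      intro x _ hx; simp [hx]
    rw [← Finset.sum_subset (Finset.subset_univ S) h0,
      ← Finset.sum_attach S (fun x => if h : x ∈ S then g ⟨x, h⟩ * A x j else 0)]
    have h1 : ∀ x : {x // x ∈ S}, (if h : (x : Fin n) ∈ S then g ⟨x, h⟩ * A x j else 0)
        = g x * A x j := by
      intro x; simp [x.2]
    simp only [h1]
    have hgj := congrFun hg j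
    simpa [Finset.sum_apply, Pi.smul_apply, smul_eq_mul] using hgj

/-- For `n×n` matrices `A, B` over a field, the one-variable polynomial `t ↦ det(tA + B)`
has degree at most `rank A`. -/
theorem det_add_smul_degree_le_rank {F : Type*} [Field F] {n : ℕ}
    (A B : Matrix (Fin n) (Fin n) F) :
    (Matrix.det (fun i j => Polynomial.X * Polynomial.C (A i j) + Polynomial.C (B i j)
        : Matrix (Fin n) (Fin n) (Polynomial F))).degree ≤ (A.rank : WithBot ℕ) := by
  classical
  set aC : Fin n → (Fin n → F[X]) := fun i j => Polynomial.C (A i j) with haC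
  set b : Fin n → (Fin n → F[X]) := fun i j => Polynomial.C (B i j) with hb
  have hM : (fun i j => Polynomial.X * Polynomial.C (A i j) + Polynomial.C (B i j)
      : Matrix (Fin n) (Fin n) (Polynomial F)) =
      (fun i => (Polynomial.X : F[X]) • aC i) + b := by
    funext i j
    simp [aC, b, Pi.add_apply, smul_eq_mul]
  rw [hM]
  unfold Matrix.det
  rw [← AlternatingMap.coe_multilinearMap]
  rw [(Matrix.detRowAlternating).toMultilinearMap.map_add_univ
    (fun i => (Polynomial.X : F[X]) • aC i) b]
  refine (Polynomial.degree_sum_le _ _).trans ?_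
  rw [Finset.sup_le_iff]
  intro S _
  set m' : Fin n → (Fin n → F[X]) := S.piecewise aC b with hm'
  have hpc : S.piecewise (fun i => (Polynomial.X : F[X]) • aC i) b
      = S.piecewise (fun i => (fun _ : Fin n => (Polynomial.X : F[X])) i • m' i) m' := by
    funext i
    by_cases h : i ∈ S <;>
      simp [hm', h, Finset.piecewise_eq_of_mem, Finset.piecewise_eq_of_notMem]
  rw [hpc, (Matrix.detRowAlternating).toMultilinearMap.map_piecewise_smul
    (fun _ : Fin n => (Polynomial.X : F[X])) m' S]
  have hpw : (S.piecewise aC b : Matrix (Fin n) (Fin n) F[X])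
      = Matrix.map (S.piecewise A B) Polynomial.C := by
    funext i j
    by_cases h : i ∈ S <;>
      simp [Matrix.map, h, Finset.piecewise, Finset.piecewise_eq_of_mem, Finset.piecewise_eq_of_notMem, aC, b]
  have hdet : Matrix.detRowAlternating.toMultilinearMap m'
      = Polynomial.C (Matrix.det (S.piecewise A B)) := by
    show Matrix.detRowAlternating (S.piecewise aC b) = _
    show Matrix.det (S.piecewise aC b) = _
    rw [hpw]
    exact (RingHom.map_det (Polynomial.C : F →+* F[X]) (S.piecewise A B)).symm
  rw [hdet, Finset.prod_const, smul_eq_mul]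
  by_cases hcard : S.card ≤ A.rank
  · refine (Polynomial.degree_mul_le _ _).trans ?_
    refine le_trans (add_le_add (Polynomial.degree_pow_le _ _) Polynomial.degree_C_le) ?_
    simp only [Polynomial.degree_X, nsmul_eq_mul, mul_one, add_zero]
    exact_mod_cast hcard
  · rw [aux_det_piecewise_eq_zero A B S (by omega), map_zero, mul_zero]
    simp
end
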